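/- Let m ≥ n ≥ 5 be odd integers, m' = (m-3)/2, n' = (n-3)/2. The Z-linear boundary operator ∂ on the free Z-module generated by the exceptional generators y_1, y_2, y_3, y_4 and the generators x_{k,q} (1 ≤ k ≤ n-2, 1 ≤ q ≤ m-2), defined by: ∂y_1 = y_2, ∂y_2 = 0, ∂y_3 = 0, ∂y_4 = -y_3; ∂x_{1,1} = x_{2,m-2} + x_{1,2} - y_2; ∂x_{1,2l} = x_{2,m-2l-1} (1 ≤ l ≤ m'); ∂x_{1,2l+1} = x_{2,m-2l-2} + x_{1,2l+2} - x_{1,2l} (1 ≤ l ≤ m'-1); ∂x_{1,m-2} = x_{2,1} - x_{1,m-3}; ∂x_{n-2,1} = x_{n-2,2} - x_{n-3,m-2}; ∂x_{n-2,2l} = -x_{n-3,m-2l-1} (1 ≤ l ≤ m'); ∂x_{n-2,2l+1} = -x_{n-3,m-2l-2} - x_{n-2,2l} + x_{n-2,2l+2} (1 ≤ l ≤ m'-1); ∂x_{n-2,m-2} = -x_{n-3,1} - x_{n-2,m-3} + y_3; ∂x_{2k,1} = x_{2k,2}, ∂x_{2k,2l} = 0 (1 ≤ l ≤ m'), ∂x_{2k,2l+1}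 = x_{2k,2l+2} - x_{2k,2l} (1 ≤ l ≤ m'-1), ∂x_{2k,m-2} = -x_{2k,m-3} (1 ≤ k ≤ n'); ∂x_{2k+1,1} = x_{2k+2,m-2} + x_{2k+1,2} - x_{2k,m-2}; ∂x_{2k+1,2l} = x_{2k+2,m-2l-1} - x_{2k,m-2l-1} (1 ≤ l ≤ m'); ∂x_{2k+1,2l+1} = x_{2k+2,m-2l-2} + x_{2k+1,2l+2} - x_{2k,m-2l-2} - x_{2k+1,2l} (1 ≤ l ≤ m'-1); ∂x_{2k+1,m-2} = x_{2k+2,1} - x_{2k+1,m-3} - x_{2k,1} (1 ≤ k ≤ n'-1); satisfies ∂ ∘ ∂ = 0. -/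
import Mathlib


/-- Index type for the generators of the pretzel complex: `Sum.inl j` with
`j = 0,1,2,3` encodes the exceptional generators `y₁, y₂, y₃, y₄`, and
`Sum.inr (k, q)` encodes the generator `x_{k,q}` (meaningful for
`1 ≤ k ≤ n-2`, `1 ≤ q ≤ m-2`). -/
abbrev PIdx : Type := Fin 4 ⊕ ℤ × ℤ

/-- The free `ℤ`-module on the generators. -/
abbrev PMod : Type := PIdx →₀ ℤ

/-- The generator `x_{k,q}`. -/
noncomputable def X (k q : ℤ) : PMod := Finsupp.single (Sum.inr (k, q)) 1

/-- The exceptional generator `y_{j+1}`. -/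
noncomputable def Y (j : Fin 4) : PMod := Finsupp.single (Sum.inl j) 1

/-- A generator index is valid when `1 ≤ k ≤ n-2` and `1 ≤ q ≤ m-2`
(exceptional generators are always valid). -/
def validIdx (m n : ℤ) : PIdx → Prop
  | Sum.inl _ => True
  | Sum.inr (k, q) => 1 ≤ k ∧ k ≤ n - 2 ∧ 1 ≤ q ∧ q ≤ m - 2

/-- The value of the boundary operator `∂` of `CFK^∞(S³, P(-2,m,n))` (with the
filtration indices forgotten) on each generator, following Lemmas 5.5–5.8:
`∂y₁ = y₂`, `∂y₂ = ∂y₃ = 0`, `∂y₄ = -y₃`, and the formulas for `∂x_{k,q}` according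
to whether `k = 1`, `k = n-2`, `k` is even (`k = 2k'`), or `k` is odd
(`k = 2k'+1`, `1 ≤ k' ≤ n'-1`), and whether `q = 1`, `q = m-2`, `q` is even
(`q = 2l`) or odd (`q = 2l+1`). -/
noncomputable def pBdryGen (m n : ℤ) : PIdx → PMod
  | Sum.inl j => if j = 0 then Y 1 else if j = 3 then -Y 2 else 0
  | Sum.inr (k, q) =>
    if k = 1 then
      (if q = 1 then X 2 (m - 2) + X 1 2 - Y 1
       else if q = m - 2 then X 2 1 - X 1 (m - 3)
       else if q % 2 = 0 then X 2 (m - q - 1)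
       else X 2 (m - q - 1) + X 1 (q + 1) - X 1 (q - 1))
    else if k = n - 2 then
      (if q = 1 then X (n - 2) 2 - X (n - 3) (m - 2)
       else if q = m - 2 then -X (n - 3) 1 - X (n - 2) (m - 3) + Y 2
       else if q % 2 = 0 then -X (n - 3) (m - q - 1)
       else -X (n - 3) (m - q - 1) - X (n - 2) (q - 1) + X (n - 2) (q + 1))
    else if k % 2 = 0 then
      (if q = 1 then X k 2
       else if q = m - 2 then -X k (m - 3)
       else if q % 2 = 0 then 0
       else X k (q + 1) - X k (q - 1))
    else
      (if q = 1 then X (k + 1) (m - 2) + X k 2 - X (k - 1) (m - 2)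
       else if q = m - 2 then X (k + 1) 1 - X k (m - 3) - X (k - 1) 1
       else if q % 2 = 0 then X (k + 1) (m - q - 1) - X (k - 1) (m - q - 1)
       else X (k + 1) (m - q - 1) + X k (q + 1) - X (k - 1) (m - q - 1) - X k (q - 1))

/-- The boundary operator `∂`, extended `ℤ`-linearly. -/
noncomputable def pBdry (m n : ℤ) : PMod →ₗ[ℤ] PMod :=
  Finsupp.lsum ℤ fun p => LinearMap.toSpanSingleton ℤ PMod (pBdryGen m n p)
set_option linter.unusedVariables false in
lemma bdry_single (m n : ℤ) (p : PIdx) :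
    pBdry m n (Finsupp.single p 1) = pBdryGen m n p := by
  simp [pBdry, Finsupp.lsum_single, LinearMap.toSpanSingleton_apply]

lemma bdry_X (m n k q : ℤ) : pBdry m n (X k q) = pBdryGen m n (Sum.inr (k, q)) :=
  bdry_single m n _

lemma bdry_Y (m n : ℤ) (j : Fin 4) : pBdry m n (Y j) = pBdryGen m n (Sum.inl j) :=
  bdry_single m n _

section
set_option linter.unusedVariables false

variable {m n : ℤ}

lemma gY1 : pBdryGen m n (Sum.inl 1) = 0 := by simp [pBdryGen]
lemma gY2 : pBdryGen m n (Sum.inl 2) = 0 := by simp [pBdryGen]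

-- Row A : k = 1
lemma gA1 (hm : m % 2 = 1) (hn : n % 2 = 1) (hmn : n ≤ m) (hn5 : 5 ≤ n) :
    pBdryGen m n (Sum.inr (1, 1)) = X 2 (m - 2) + X 1 2 - Y 1 := by
  simp only [pBdryGen]; split_ifs <;> first | rfl | omega

lemma gAm (hm : m % 2 = 1) (hn : n % 2 = 1) (hmn : n ≤ m) (hn5 : 5 ≤ n) :
    pBdryGen m n (Sum.inr (1, m - 2)) = X 2 1 - X 1 (m - 3) := by
  simp only [pBdryGen]; split_ifs <;> first | rfl | omega

lemma gAe (hm : m % 2 = 1) (hn : n % 2 = 1) (hmn : n ≤ m) (hn5 : 5 ≤ n)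
    (q : ℤ) (h0 : q % 2 = 0) (h1 : 1 ≤ q) (h2 : q ≤ m - 2) :
    pBdryGen m n (Sum.inr (1, q)) = X 2 (m - q - 1) := by
  simp only [pBdryGen]; split_ifs <;> first | rfl | omega

lemma gAo (hm : m % 2 = 1) (hn : n % 2 = 1) (hmn : n ≤ m) (hn5 : 5 ≤ n)
    (q : ℤ) (h0 : q % 2 = 1) (h1 : 3 ≤ q) (h2 : q ≤ m - 4) :
    pBdryGen m n (Sum.inr (1, q)) = X 2 (m - q - 1) + X 1 (q + 1) - X 1 (q - 1) := by
  simp only [pBdryGen]; split_ifs <;> first | rfl | omega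

-- Row B : k = n - 2
lemma gB1 (hm : m % 2 = 1) (hn : n % 2 = 1) (hmn : n ≤ m) (hn5 : 5 ≤ n) :
    pBdryGen m n (Sum.inr (n - 2, 1)) = X (n - 2) 2 - X (n - 3) (m - 2) := by
  simp only [pBdryGen]; split_ifs <;> first | rfl | omega

lemma gBm (hm : m % 2 = 1) (hn : n % 2 = 1) (hmn : n ≤ m) (hn5 : 5 ≤ n) :
    pBdryGen m n (Sum.inr (n - 2, m - 2)) = -X (n - 3) 1 - X (n - 2) (m - 3) + Y 2 := by
  simp only [pBdryGen]; split_ifs <;> first | rfl | omega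

lemma gBe (hm : m % 2 = 1) (hn : n % 2 = 1) (hmn : n ≤ m) (hn5 : 5 ≤ n)
    (q : ℤ) (h0 : q % 2 = 0) (h1 : 1 ≤ q) (h2 : q ≤ m - 2) :
    pBdryGen m n (Sum.inr (n - 2, q)) = -X (n - 3) (m - q - 1) := by
  simp only [pBdryGen]; split_ifs <;> first | rfl | omega

lemma gBo (hm : m % 2 = 1) (hn : n % 2 = 1) (hmn : n ≤ m) (hn5 : 5 ≤ n)
    (q : ℤ) (h0 : q % 2 = 1) (h1 : 3 ≤ q) (h2 : q ≤ m - 4) :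
    pBdryGen m n (Sum.inr (n - 2, q)) =
      -X (n - 3) (m - q - 1) - X (n - 2) (q - 1) + X (n - 2) (q + 1) := by
  simp only [pBdryGen]; split_ifs <;> first | rfl | omega

-- Row C : k even, 2 ≤ k ≤ n - 3
lemma gC1 (hm : m % 2 = 1) (hn : n % 2 = 1) (hmn : n ≤ m) (hn5 : 5 ≤ n)
    (k : ℤ) (hk0 : k % 2 = 0) (hk1 : 2 ≤ k) (hk2 : k ≤ n - 3) :
    pBdryGen m n (Sum.inr (k, 1)) = X k 2 := by
  simp only [pBdryGen]; split_ifs <;> first | rfl | omega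

lemma gCm (hm : m % 2 = 1) (hn : n % 2 = 1) (hmn : n ≤ m) (hn5 : 5 ≤ n)
    (k : ℤ) (hk0 : k % 2 = 0) (hk1 : 2 ≤ k) (hk2 : k ≤ n - 3) :
    pBdryGen m n (Sum.inr (k, m - 2)) = -X k (m - 3) := by
  simp only [pBdryGen]; split_ifs <;> first | rfl | omega

lemma gCe (hm : m % 2 = 1) (hn : n % 2 = 1) (hmn : n ≤ m) (hn5 : 5 ≤ n)
    (k : ℤ) (hk0 : k % 2 = 0) (hk1 : 2 ≤ k) (hk2 : k ≤ n - 3)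
    (q : ℤ) (h0 : q % 2 = 0) (h1 : 1 ≤ q) (h2 : q ≤ m - 2) :
    pBdryGen m n (Sum.inr (k, q)) = 0 := by
  simp only [pBdryGen]; split_ifs <;> first | rfl | omega

lemma gCo (hm : m % 2 = 1) (hn : n % 2 = 1) (hmn : n ≤ m) (hn5 : 5 ≤ n)
    (k : ℤ) (hk0 : k % 2 = 0) (hk1 : 2 ≤ k) (hk2 : k ≤ n - 3)
    (q : ℤ) (h0 : q % 2 = 1) (h1 : 3 ≤ q) (h2 : q ≤ m - 4) :
    pBdryGen m n (Sum.inr (k, q)) = X k (q + 1) - X k (q - 1) := by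
  simp only [pBdryGen]; split_ifs <;> first | rfl | omega

-- Row D : k odd, 3 ≤ k ≤ n - 4
lemma gD1 (hm : m % 2 = 1) (hn : n % 2 = 1) (hmn : n ≤ m) (hn5 : 5 ≤ n)
    (k : ℤ) (hk0 : k % 2 = 1) (hk1 : 3 ≤ k) (hk2 : k ≤ n - 4) :
    pBdryGen m n (Sum.inr (k, 1)) = X (k + 1) (m - 2) + X k 2 - X (k - 1) (m - 2) := by
  simp only [pBdryGen]; split_ifs <;> first | rfl | omega

lemma gDm (hm : m % 2 = 1) (hn : n % 2 = 1) (hmn : n ≤ m) (hn5 : 5 ≤ n)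
    (k : ℤ) (hk0 : k % 2 = 1) (hk1 : 3 ≤ k) (hk2 : k ≤ n - 4) :
    pBdryGen m n (Sum.inr (k, m - 2)) = X (k + 1) 1 - X k (m - 3) - X (k - 1) 1 := by
  simp only [pBdryGen]; split_ifs <;> first | rfl | omega

lemma gDe (hm : m % 2 = 1) (hn : n % 2 = 1) (hmn : n ≤ m) (hn5 : 5 ≤ n)
    (k : ℤ) (hk0 : k % 2 = 1) (hk1 : 3 ≤ k) (hk2 : k ≤ n - 4)
    (q : ℤ) (h0 : q % 2 = 0) (h1 : 1 ≤ q) (h2 : q ≤ m - 2) :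
    pBdryGen m n (Sum.inr (k, q)) = X (k + 1) (m - q - 1) - X (k - 1) (m - q - 1) := by
  simp only [pBdryGen]; split_ifs <;> first | rfl | omega

lemma gDo (hm : m % 2 = 1) (hn : n % 2 = 1) (hmn : n ≤ m) (hn5 : 5 ≤ n)
    (k : ℤ) (hk0 : k % 2 = 1) (hk1 : 3 ≤ k) (hk2 : k ≤ n - 4)
    (q : ℤ) (h0 : q % 2 = 1) (h1 : 3 ≤ q) (h2 : q ≤ m - 4) :
    pBdryGen m n (Sum.inr (k, q)) =
      X (k + 1) (m - q - 1) + X k (q + 1) - X (k - 1) (m - q - 1) - X k (q - 1) := by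
  simp only [pBdryGen]; split_ifs <;> first | rfl | omega

end
/-- For odd integers `m ≥ n ≥ 5`, the boundary operator `∂` of the pretzel complex
satisfies `∂ ∘ ∂ = 0` on the submodule spanned by the (valid) generators. -/
theorem pretzel_bdry_squared_zero (m n : ℤ) (hm : Odd m) (hn : Odd n)
    (hmn : n ≤ m) (hn5 : 5 ≤ n) :
    ∀ p : PIdx, validIdx m n p →
      pBdry m n (pBdry m n (Finsupp.single p 1)) = 0 := by
  have hm2 : m % 2 = 1 := Int.odd_iff.mp hm
  have hn2 : n % 2 = 1 := Int.odd_iff.mp hn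
  rintro (j | ⟨k, q⟩) hp
  · fin_cases j <;>
      simp [bdry_single, pBdryGen, Y, Fin.isValue, map_neg]
  · obtain ⟨hk1, hk2, hq1, hq2⟩ := hp
    rw [bdry_single]
    by_cases hA : k = 1
    · subst hA
      by_cases h1 : q = 1
      · subst h1
        rw [gA1 hm2 hn2 hmn hn5]
        simp only [map_add, map_sub, bdry_X, bdry_Y]
        rw [gCm hm2 hn2 hmn hn5 2 (by omega) (by omega) (by omega),
          gAe hm2 hn2 hmn hn5 2 (by omega) (by omega) (by omega), gY1,
          show m - 2 - 1 = m - 3 by ring]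
        abel
      · by_cases h2 : q = m - 2
        · subst h2
          rw [gAm hm2 hn2 hmn hn5]
          simp only [map_sub, bdry_X]
          rw [gC1 hm2 hn2 hmn hn5 2 (by omega) (by omega) (by omega),
            gAe hm2 hn2 hmn hn5 (m - 3) (by omega) (by omega) (by omega),
            show m - (m - 3) - 1 = 2 by ring]
          abel
        · by_cases he : q % 2 = 0
          · rw [gAe hm2 hn2 hmn hn5 q he (by omega) (by omega), bdry_X,
              gCe hm2 hn2 hmn hn5 2 (by omega) (by omega) (by omega)
                (m - q - 1) (by omega) (by omega) (by omega)]
          · rw [gAo hm2 hn2 hmn hn5 q (by omega) (by omega) (by omega)]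
            simp only [map_add, map_sub, bdry_X]
            rw [gCo hm2 hn2 hmn hn5 2 (by omega) (by omega) (by omega)
                (m - q - 1) (by omega) (by omega) (by omega),
              gAe hm2 hn2 hmn hn5 (q + 1) (by omega) (by omega) (by omega),
              gAe hm2 hn2 hmn hn5 (q - 1) (by omega) (by omega) (by omega),
              show m - q - 1 + 1 = m - q by ring,
              show m - q - 1 - 1 = m - (q + 1) - 1 by ring,
              show m - (q - 1) - 1 = m - q by ring]
            abel
    · by_cases hB : k = n - 2
      · subst hB
        by_cases h1 : q = 1
        · subst h1
          rw [gB1 hm2 hn2 hmn hn5]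
          simp only [map_sub, bdry_X]
          rw [gBe hm2 hn2 hmn hn5 2 (by omega) (by omega) (by omega),
            gCm hm2 hn2 hmn hn5 (n - 3) (by omega) (by omega) (by omega),
            show m - 2 - 1 = m - 3 by ring]
          abel
        · by_cases h2 : q = m - 2
          · subst h2
            rw [gBm hm2 hn2 hmn hn5]
            simp only [map_add, map_sub, map_neg, bdry_X, bdry_Y]
            rw [gC1 hm2 hn2 hmn hn5 (n - 3) (by omega) (by omega) (by omega),
              gBe hm2 hn2 hmn hn5 (m - 3) (by omega) (by omega) (by omega), gY2,
              show m - (m - 3) - 1 = 2 by ring]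
            abel
          · by_cases he : q % 2 = 0
            · rw [gBe hm2 hn2 hmn hn5 q he (by omega) (by omega), map_neg, bdry_X,
                gCe hm2 hn2 hmn hn5 (n - 3) (by omega) (by omega) (by omega)
                  (m - q - 1) (by omega) (by omega) (by omega), neg_zero]
            · rw [gBo hm2 hn2 hmn hn5 q (by omega) (by omega) (by omega)]
              simp only [map_add, map_sub, map_neg, bdry_X]
              rw [gCo hm2 hn2 hmn hn5 (n - 3) (by omega) (by omega) (by omega)
                  (m - q - 1) (by omega) (by omega) (by omega),
                gBe hm2 hn2 hmn hn5 (q + 1) (by omega) (by omega) (by omega),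
                gBe hm2 hn2 hmn hn5 (q - 1) (by omega) (by omega) (by omega),
                show m - q - 1 + 1 = m - q by ring,
                show m - q - 1 - 1 = m - (q + 1) - 1 by ring,
                show m - (q - 1) - 1 = m - q by ring]
              abel
      · by_cases hC : k % 2 = 0
        · by_cases h1 : q = 1
          · subst h1
            rw [gC1 hm2 hn2 hmn hn5 k hC (by omega) (by omega), bdry_X,
              gCe hm2 hn2 hmn hn5 k hC (by omega) (by omega) 2 (by omega)
                (by omega) (by omega)]
          · by_cases h2 : q = m - 2
            · subst h2
              rw [gCm hm2 hn2 hmn hn5 k hC (by omega) (by omega), map_neg, bdry_X,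
                gCe hm2 hn2 hmn hn5 k hC (by omega) (by omega) (m - 3) (by omega)
                  (by omega) (by omega), neg_zero]
            · by_cases he : q % 2 = 0
              · rw [gCe hm2 hn2 hmn hn5 k hC (by omega) (by omega) q he (by omega)
                  (by omega), map_zero]
              · rw [gCo hm2 hn2 hmn hn5 k hC (by omega) (by omega) q (by omega)
                  (by omega) (by omega)]
                simp only [map_sub, bdry_X]
                rw [gCe hm2 hn2 hmn hn5 k hC (by omega) (by omega) (q + 1) (by omega)
                    (by omega) (by omega),
                  gCe hm2 hn2 hmn hn5 k hC (by omega) (by omega) (q - 1) (by omega)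
                    (by omega) (by omega), sub_zero]
        · -- k odd, 3 ≤ k ≤ n - 4
          have hk3 : 3 ≤ k := by omega
          have hk4 : k ≤ n - 4 := by omega
          by_cases h1 : q = 1
          · subst h1
            rw [gD1 hm2 hn2 hmn hn5 k (by omega) hk3 hk4]
            simp only [map_add, map_sub, bdry_X]
            rw [gCm hm2 hn2 hmn hn5 (k + 1) (by omega) (by omega) (by omega),
              gCm hm2 hn2 hmn hn5 (k - 1) (by omega) (by omega) (by omega),
              gDe hm2 hn2 hmn hn5 k (by omega) hk3 hk4 2 (by omega) (by omega)
                (by omega),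
              show m - 2 - 1 = m - 3 by ring]
            abel
          · by_cases h2 : q = m - 2
            · subst h2
              rw [gDm hm2 hn2 hmn hn5 k (by omega) hk3 hk4]
              simp only [map_sub, bdry_X]
              rw [gC1 hm2 hn2 hmn hn5 (k + 1) (by omega) (by omega) (by omega),
                gC1 hm2 hn2 hmn hn5 (k - 1) (by omega) (by omega) (by omega),
                gDe hm2 hn2 hmn hn5 k (by omega) hk3 hk4 (m - 3) (by omega)
                  (by omega) (by omega),
                show m - (m - 3) - 1 = 2 by ring]
              abel
            · by_cases he : q % 2 = 0
              · rw [gDe hm2 hn2 hmn hn5 k (by omega) hk3 hk4 q he (by omega)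
                  (by omega)]
                simp only [map_sub, bdry_X]
                rw [gCe hm2 hn2 hmn hn5 (k + 1) (by omega) (by omega) (by omega)
                    (m - q - 1) (by omega) (by omega) (by omega),
                  gCe hm2 hn2 hmn hn5 (k - 1) (by omega) (by omega) (by omega)
                    (m - q - 1) (by omega) (by omega) (by omega), sub_zero]
              · rw [gDo hm2 hn2 hmn hn5 k (by omega) hk3 hk4 q (by omega) (by omega)
                  (by omega)]
                simp only [map_add, map_sub, bdry_X]
                rw [gCo hm2 hn2 hmn hn5 (k + 1) (by omega) (by omega) (by omega)
                    (m - q - 1) (by omega) (by omega) (by omega),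
                  gCo hm2 hn2 hmn hn5 (k - 1) (by omega) (by omega) (by omega)
                    (m - q - 1) (by omega) (by omega) (by omega),
                  gDe hm2 hn2 hmn hn5 k (by omega) hk3 hk4 (q + 1) (by omega)
                    (by omega) (by omega),
                  gDe hm2 hn2 hmn hn5 k (by omega) hk3 hk4 (q - 1) (by omega)
                    (by omega) (by omega),
                  show m - q - 1 + 1 = m - q by ring,
                  show m - q - 1 - 1 = m - (q + 1) - 1 by ring,
                  show m - (q - 1) - 1 = m - q by ring]
                abel
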